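/- In the space 𝒢_3, the set of graphs of infinite rank is a dense G_δ set. -/

import Mathlib

open TopologicalSpace

/-- A based (multi)graph with vertex set `ℕ` and edge set `ℕ`: each edge is an
unordered pair of vertices (self-loops and multiple edges allowed), with a basepoint. -/
structure BasedGraph where
  edges : ℕ → Sym2 ℕ
  base : ℕ

namespace BasedGraph

/-- Two vertices are adjacent if some edge joins them. -/
def Adj (G : BasedGraph) (u v : ℕ) : Prop := ∃ e : ℕ, G.edges e = s(u, v)

/-- There is a walk of length `n` from `u` to `v`. -/
def ReachesIn (G : BasedGraph) (n u v : ℕ) : Prop :=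
  ∃ f : ℕ → ℕ, f 0 = u ∧ f n = v ∧ ∀ i < n, G.Adj (f i) (f (i + 1))

/-- Connectedness: every pair of vertices is joined by a walk. -/
def Connected (G : BasedGraph) : Prop := ∀ u v : ℕ, ∃ n, G.ReachesIn n u v

/-- Local finiteness: each vertex meets only finitely many edges. -/
def LocallyFinite (G : BasedGraph) : Prop := ∀ v : ℕ, {e : ℕ | v ∈ G.edges e}.Finite

/-- Degree of a vertex: incident edges, with self-loops counted twice. -/
noncomputable def degree (G : BasedGraph) (v : ℕ) : ℕ :=
  {e : ℕ | v ∈ G.edges e}.ncard + {e : ℕ | G.edges e = s(v, v)}.ncard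

/-- `k`-regular: locally finite with every vertex of degree exactly `k`. -/
def Regular (G : BasedGraph) (k : ℕ) : Prop := G.LocallyFinite ∧ ∀ v, G.degree v = k

/-- Path metric distance (length of a shortest walk). -/
noncomputable def dist (G : BasedGraph) (u v : ℕ) : ℕ := sInf {n | G.ReachesIn n u v}

/-- Vertices of the ball of radius `r` around the basepoint. -/
def ballV (G : BasedGraph) (r : ℕ) : Set ℕ := {v | G.dist G.base v ≤ r}

/-- Edges of the ball of radius `r`: both endpoints lie in the vertex ball. -/
def ballE (G : BasedGraph) (r : ℕ) : Set ℕ := {e | ∀ v ∈ G.edges e, v ∈ G.ballV r}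

/-- The balls of radius `r` around the basepoints of `G₁`, `G₂` are isomorphic
as based graphs. -/
def BallIso (r : ℕ) (G₁ G₂ : BasedGraph) : Prop :=
  ∃ (σ : G₁.ballV r ≃ G₂.ballV r) (τ : G₁.ballE r ≃ G₂.ballE r),
    (∀ h₁ : G₁.base ∈ G₁.ballV r, (σ ⟨G₁.base, h₁⟩ : ℕ) = G₂.base) ∧
    ∀ (e : G₁.ballE r) (u v : ℕ) (hu : u ∈ G₁.ballV r) (hv : v ∈ G₁.ballV r),
      G₁.edges ↑e = s(u, v) →
        G₂.edges ↑(τ e) = s((σ ⟨u, hu⟩ : ℕ), (σ ⟨v, hv⟩ : ℕ))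

/-- Based isomorphism of graphs. -/
def Iso (G₁ G₂ : BasedGraph) : Prop :=
  ∃ (σ : ℕ ≃ ℕ) (τ : ℕ ≃ ℕ), σ G₁.base = G₂.base ∧
    ∀ e : ℕ, G₂.edges (τ e) = Sym2.map σ (G₁.edges e)

/-- `d(Γ₁,Γ₂) = inf { 2^{-r} : B_r(Γ₁) ≅ B_r(Γ₂) }` (with `1 = 2⁻⁰` as default cap). -/
noncomputable def gdist (G₁ G₂ : BasedGraph) : ℝ :=
  sInf (insert 1 {x : ℝ | ∃ r : ℕ, BallIso r G₁ G₂ ∧ x = (2 : ℝ)⁻¹ ^ r})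

/-- Reachability by a walk avoiding a set `S` of vertices. -/
def ReachAvoid (G : BasedGraph) (S : Set ℕ) (u v : ℕ) : Prop :=
  ∃ (n : ℕ) (f : ℕ → ℕ), f 0 = u ∧ f n = v ∧ (∀ i ≤ n, f i ∉ S) ∧
    ∀ i < n, G.Adj (f i) (f (i + 1))

/-- The end space of `G`: inverse limit over finite (= compact) subgraphs of the
(discrete, finite) sets of connected components of the complement; a point assigns
to each finite vertex set `S` (the characteristic function of) a connected component
of `G ∖ S`, compatibly. -/
def EndSpace (G : BasedGraph) : Type :=
  {e : Finset ℕ → ℕ → Bool //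
    (∀ S : Finset ℕ, ∃ v ∉ (S : Set ℕ), ∀ w, e S w = true ↔ G.ReachAvoid (↑S) v w) ∧
    ∀ S T : Finset ℕ, S ⊆ T → ∀ w, e T w = true → e S w = true}

instance (G : BasedGraph) : TopologicalSpace (EndSpace G) :=
  inferInstanceAs (TopologicalSpace
    {e : Finset ℕ → ℕ → Bool //
    (∀ S : Finset ℕ, ∃ v ∉ (S : Set ℕ), ∀ w, e S w = true ↔ G.ReachAvoid (↑S) v w) ∧
    ∀ S T : Finset ℕ, S ⊆ T → ∀ w, e T w = true → e S w = true})

/-- The (induced subgraph on) `A` has first Betti number (rank) at least `n`: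
some finite subgraph `(VF, EF)` inside `A` has `#EF - #VF + 1 ≥ n`. -/
def RankGe (G : BasedGraph) (A : Set ℕ) (n : ℕ) : Prop :=
  ∃ VF EF : Finset ℕ, (↑VF : Set ℕ) ⊆ A ∧
    (∀ e ∈ EF, ∀ v, v ∈ G.edges e → v ∈ VF) ∧ VF.card + n ≤ EF.card + 1

/-- An end is accumulated by loops if each of its neighborhoods has infinite rank. -/
def AccumulatedByLoops (G : BasedGraph) (e : EndSpace G) : Prop :=
  ∀ S : Finset ℕ, ∀ n : ℕ, RankGe G {w | e.1 S w = true} n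

/-- One-ended: the end space is a single point. -/
def OneEnded (G : BasedGraph) : Prop :=
  Nonempty (EndSpace G) ∧ ∀ e₁ e₂ : EndSpace G, e₁ = e₂

/-- Any two vertices at distance exactly `n` from the basepoint are joined by a
path avoiding the open ball of radius `n`. -/
def OutsideConnected (G : BasedGraph) (n : ℕ) : Prop :=
  ∀ u v : ℕ, G.dist G.base u = n → G.dist G.base v = n →
    G.ReachAvoid {w | G.dist G.base w < n} u v

-- ===== my lemmas =====

variable {G : BasedGraph}

lemma sym2_exists (z : Sym2 ℕ) : ∃ a b, z = s(a, b) := by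
  induction z using Sym2.ind with | _ a b => exact ⟨a, b, rfl⟩

lemma Adj.symm {u v : ℕ} (h : G.Adj u v) : G.Adj v u := by
  obtain ⟨e, he⟩ := h; exact ⟨e, by rw [he, Sym2.eq_swap]⟩

lemma reach_zero (u : ℕ) : G.ReachesIn 0 u u :=
  ⟨fun _ => u, rfl, rfl, fun i h => absurd h (Nat.not_lt_zero i)⟩

lemma reach_succ {n u v w : ℕ} (h : G.ReachesIn n u v) (hvw : G.Adj v w) :
    G.ReachesIn (n + 1) u w := by
  obtain ⟨f, hf0, hfn, hfa⟩ := h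
  refine ⟨fun i => if i ≤ n then f i else w, by simp [hf0], by simp, ?_⟩
  intro i hi
  rcases Nat.lt_or_ge i n with h' | h'
  · simpa [Nat.le_of_lt h', Nat.succ_le_of_lt h'] using hfa i h'
  · have : i = n := by omega
    subst this
    simpa [hfn] using hvw

lemma reach_trans {n k u v w : ℕ} (h1 : G.ReachesIn n u v) (h2 : G.ReachesIn k v w) :
    G.ReachesIn (n + k) u w := by
  obtain ⟨f, hf0, hfn, hfa⟩ := h1
  obtain ⟨g, hg0, hgk, hga⟩ := h2
  refine ⟨fun i => if i ≤ n then f i else g (i - n), by simp [hf0], ?_, ?_⟩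
  · by_cases hk : k = 0
    · subst hk; simp [hfn, ← hg0, ← hgk]
    · have : ¬ (n + k ≤ n) := by omega
      simp [this, hgk]
  · intro i hi
    dsimp only
    rcases Nat.lt_or_ge i n with h' | h'
    · simpa [Nat.le_of_lt h', Nat.succ_le_of_lt h'] using hfa i h'
    · have key : ∀ j, n ≤ j → (if j ≤ n then f j else g (j - n)) = g (j - n) := by
        intro j hj
        rcases Nat.eq_or_lt_of_le hj with h | h
        · simp [← h, hfn, hg0]
        · simp [Nat.not_le.mpr h]
      rw [key i h', key (i+1) (by omega)]
      have : i + 1 - n = (i - n) + 1 := by omega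
      rw [this]
      exact hga _ (by omega)

lemma reach_symm {n u v : ℕ} (h : G.ReachesIn n u v) : G.ReachesIn n v u := by
  obtain ⟨f, hf0, hfn, hfa⟩ := h
  refine ⟨fun i => f (n - i), by simp [hfn], by simp [hf0], ?_⟩
  intro i hi
  dsimp only
  have h1 : n - i = (n - (i+1)) + 1 := by omega
  rw [h1]
  exact (hfa (n - (i+1)) (by omega)).symm

lemma dist_le {n u v : ℕ} (h : G.ReachesIn n u v) : G.dist u v ≤ n :=
  Nat.sInf_le h

lemma reach_dist {u v : ℕ} (h : ∃ n, G.ReachesIn n u v) : G.ReachesIn (G.dist u v) u v :=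
  Nat.sInf_mem h

lemma dist_self (u : ℕ) : G.dist u u = 0 :=
  Nat.le_zero.mp (dist_le (reach_zero u))

lemma dist_step (hc : G.Connected) {u v : ℕ} (h : G.Adj u v) (b : ℕ) :
    G.dist b v ≤ G.dist b u + 1 :=
  dist_le (reach_succ (reach_dist (hc b u)) h)

/-- potential function bound -/
lemma phi_le_reach (φ : ℕ → ℕ) (hb : φ G.base = 0)
    (hlip : ∀ u v, G.Adj u v → φ v ≤ φ u + 1) :
    ∀ n v, G.ReachesIn n G.base v → φ v ≤ n := by
  intro n
  induction n with
  | zero => intro v ⟨f, hf0, hfn, _⟩; rw [← hfn, hf0, hb]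
  | succ n ih =>
    intro v ⟨f, hf0, hfn, hfa⟩
    have h1 : φ (f n) ≤ n := ih (f n) ⟨f, hf0, rfl, fun i hi => hfa i (by omega)⟩
    have h2 := hlip (f n) (f (n+1)) (hfa n (by omega))
    rw [← hfn]
    omega

lemma phi_le_dist (φ : ℕ → ℕ) (hb : φ G.base = 0)
    (hlip : ∀ u v, G.Adj u v → φ v ≤ φ u + 1) {v : ℕ} (h : ∃ n, G.ReachesIn n G.base v) :
    φ v ≤ G.dist G.base v :=
  phi_le_reach φ hb hlip _ v (reach_dist h)

lemma ballV_mono {r r' : ℕ} (h : r ≤ r') : G.ballV r ⊆ G.ballV r' :=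
  fun _ hv => le_trans hv h

lemma mem_ballV_of_ballE {r e v : ℕ} (he : e ∈ G.ballE r) (hv : v ∈ G.edges e) :
    v ∈ G.ballV r := he v hv

lemma ballE_mono {r r' : ℕ} (h : r ≤ r') : G.ballE r ⊆ G.ballE r' :=
  fun _ he v hv => ballV_mono h (he v hv)

lemma base_mem_ballV (r : ℕ) : G.base ∈ G.ballV r := by
  show G.dist G.base G.base ≤ r
  simp [dist_self]

/-- vertex ball is finite for locally finite graphs -/
lemma ballV_finite (hc : G.Connected) (hlf : G.LocallyFinite) (r : ℕ) :
    (G.ballV r).Finite := by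
  induction r with
  | zero =>
    apply Set.Finite.subset (Set.finite_singleton G.base)
    intro v hv
    have h0 : G.dist G.base v = 0 := Nat.le_zero.mp hv
    have := reach_dist (hc G.base v)
    rw [h0] at this
    obtain ⟨f, hf0, hfn, _⟩ := this
    simp [← hfn, hf0]
  | succ r ih =>
    have : G.ballV (r+1) ⊆ G.ballV r ∪ ⋃ u ∈ G.ballV r, {v | G.Adj u v} := by
      intro v hv
      rcases Nat.lt_or_ge (G.dist G.base v) (r+1) with h | h
      · exact Or.inl (Nat.lt_succ_iff.mp h)
      · have hd : G.dist G.base v = r + 1 := le_antisymm hv h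
        have hw := reach_dist (hc G.base v)
        rw [hd] at hw
        obtain ⟨f, hf0, hfn, hfa⟩ := hw
        right
        refine Set.mem_biUnion (show f r ∈ G.ballV r from ?_) ?_
        · exact dist_le ⟨f, hf0, rfl, fun i hi => hfa i (by omega)⟩
        · rw [← hfn]; exact hfa r (by omega)
    apply Set.Finite.subset (ih.union (Set.Finite.biUnion ih ?_)) this
    intro u _
    have hsub : {v | G.Adj u v} ⊆ ⋃ e ∈ {e | u ∈ G.edges e}, {w | w ∈ G.edges e} := by
      intro v ⟨e, he⟩
      refine Set.mem_biUnion (show e ∈ {e | u ∈ G.edges e} from ?_) ?_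
      · simp [he, Sym2.mem_iff]
      · simp [he, Sym2.mem_iff]
    refine Set.Finite.subset ((hlf u).biUnion ?_) hsub
    intro e _
    obtain ⟨a, b, hab⟩ := sym2_exists (G.edges e)
    refine Set.Finite.subset ((Set.finite_singleton b).insert a) ?_
    intro w hw
    rw [hab] at hw
    rcases Sym2.mem_iff.mp hw with h | h <;> simp [h]

lemma ballE_finite (hc : G.Connected) (hlf : G.LocallyFinite) (r : ℕ) :
    (G.ballE r).Finite := by
  have hsub : G.ballE r ⊆ ⋃ v ∈ G.ballV r, {e | v ∈ G.edges e} := by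
    intro e he
    obtain ⟨a, b, hab⟩ := sym2_exists (G.edges e)
    have ha : a ∈ G.edges e := by rw [hab]; exact Sym2.mem_mk_left a b
    exact Set.mem_biUnion (he a ha) ha
  exact Set.Finite.subset ((ballV_finite hc hlf r).biUnion fun v _ => hlf v) hsub

lemma ballV_compl_infinite (hc : G.Connected) (hlf : G.LocallyFinite) (r : ℕ) :
    (G.ballV r)ᶜ.Infinite :=
  Set.Finite.infinite_compl (ballV_finite hc hlf r)

lemma degree_pos_incident_nonempty {v : ℕ} (h : G.degree v = 3) :
    {e | v ∈ G.edges e}.Nonempty := by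
  by_contra hne
  rw [Set.not_nonempty_iff_eq_empty] at hne
  have h2 : {e : ℕ | G.edges e = s(v, v)} ⊆ {e | v ∈ G.edges e} := by
    intro e he
    simp only [Set.mem_setOf_eq] at he ⊢
    rw [he]; exact Sym2.mem_mk_left v v
  rw [degree, hne] at h
  rw [hne, Set.subset_empty_iff] at h2
  rw [h2] at h
  simp at h

lemma ballE_compl_infinite (hc : G.Connected) (hreg : G.Regular 3) (r : ℕ) :
    (G.ballE r)ᶜ.Infinite := by
  intro hfin
  have hsub : (G.ballV (r+1))ᶜ ⊆ ⋃ e ∈ (G.ballE r)ᶜ, {w | w ∈ G.edges e} := by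
    intro v hv
    obtain ⟨e, he⟩ := degree_pos_incident_nonempty (hreg.2 v)
    refine Set.mem_biUnion (show e ∈ (G.ballE r)ᶜ from ?_) he
    intro hball
    exact hv (ballV_mono (by omega) (hball v he))
  have hfin2 : (⋃ e ∈ (G.ballE r)ᶜ, {w | w ∈ G.edges e}).Finite := by
    refine hfin.biUnion fun e _ => ?_
    obtain ⟨a, b, hab⟩ := sym2_exists (G.edges e)
    refine Set.Finite.subset ((Set.finite_singleton b).insert a) ?_
    intro w hw
    rw [hab] at hw
    rcases Sym2.mem_iff.mp hw with h | h <;> simp [h]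
  exact ballV_compl_infinite hc hreg.1 (r+1) (hfin2.subset hsub)

lemma BallIso.rfl_of_eq {G₁ G₂ : BasedGraph} {r : ℕ} (hbase : G₁.base = G₂.base)
    (hV : G₁.ballV r = G₂.ballV r) (hE : G₁.ballE r = G₂.ballE r)
    (hedge : ∀ e ∈ G₁.ballE r, G₁.edges e = G₂.edges e) : BallIso r G₁ G₂ := by
  refine ⟨Equiv.setCongr hV, Equiv.setCongr hE, ?_, ?_⟩
  · intro h₁; simpa using hbase
  · intro e u v hu hv h
    simpa using (hedge e.1 e.2 ▸ h)

lemma BallIso.trans' {G₁ G₂ G₃ : BasedGraph} {r : ℕ} (h₁ : BallIso r G₁ G₂)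
    (h₂ : BallIso r G₂ G₃) : BallIso r G₁ G₃ := by
  obtain ⟨σ₁, τ₁, hb₁, he₁⟩ := h₁
  obtain ⟨σ₂, τ₂, hb₂, he₂⟩ := h₂
  refine ⟨σ₁.trans σ₂, τ₁.trans τ₂, ?_, ?_⟩
  · intro hb
    have h1 := hb₁ hb
    have : σ₁ ⟨G₁.base, hb⟩ = ⟨G₂.base, h1 ▸ (σ₁ ⟨G₁.base, hb⟩).2⟩ := Subtype.ext h1
    simp only [Equiv.trans_apply, this]
    exact hb₂ _
  · intro e u v hu hv h
    have h1 := he₁ e u v hu hv h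
    have h2 := he₂ (τ₁ e) _ _ (σ₁ ⟨u, hu⟩).2 (σ₁ ⟨v, hv⟩).2 h1
    simpa only [Equiv.trans_apply, Subtype.coe_eta] using h2

lemma RankGe_of_ballIso {G₁ G₂ : BasedGraph} {r n : ℕ} (h : BallIso r G₁ G₂)
    (VF EF : Finset ℕ) (hVF : ∀ v ∈ VF, v ∈ G₁.ballV r)
    (hEF : ∀ e ∈ EF, ∀ v, v ∈ G₁.edges e → v ∈ VF)
    (hcard : VF.card + n ≤ EF.card + 1) : RankGe G₂ Set.univ n := by
  obtain ⟨σ, τ, hbase, hedge⟩ := h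
  have hEFball : ∀ e (he : e ∈ EF), e ∈ G₁.ballE r := fun e he v hv => hVF _ (hEF e he v hv)
  classical
  refine ⟨VF.attach.image (fun x => (σ ⟨x.1, hVF _ x.2⟩ : ℕ)),
          EF.attach.image (fun x => (τ ⟨x.1, hEFball _ x.2⟩ : ℕ)), ?_, ?_, ?_⟩
  · intro x _; trivial
  · intro e' he' w hw
    simp only [Finset.mem_image, Finset.mem_attach, true_and] at he'
    obtain ⟨⟨e, he⟩, rfl⟩ := he'
    obtain ⟨a, b, hab⟩ := sym2_exists (G₁.edges e)
    have ha : a ∈ VF := hEF e he a (by rw [hab]; exact Sym2.mem_mk_left a b)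
    have hb : b ∈ VF := hEF e he b (by rw [hab]; exact Sym2.mem_mk_right a b)
    have hedge' := hedge ⟨e, hEFball _ he⟩ a b (hVF _ ha) (hVF _ hb) hab
    rw [hedge'] at hw
    simp only [Finset.mem_image, Finset.mem_attach, true_and]
    rcases Sym2.mem_iff.mp hw with h | h
    · exact ⟨⟨a, ha⟩, h.symm⟩
    · exact ⟨⟨b, hb⟩, h.symm⟩
  · have c1 : (VF.attach.image (fun x => (σ ⟨x.1, hVF _ x.2⟩ : ℕ))).card = VF.card := by
      rw [Finset.card_image_of_injective _ ?_, Finset.card_attach]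
      intro x y hxy
      have h2 : σ ⟨x.1, hVF _ x.2⟩ = σ ⟨y.1, hVF _ y.2⟩ := Subtype.ext hxy
      have h3 := σ.injective h2
      exact Subtype.ext (Subtype.mk_eq_mk.mp h3)
    have c2 : (EF.attach.image (fun x => (τ ⟨x.1, hEFball _ x.2⟩ : ℕ))).card = EF.card := by
      rw [Finset.card_image_of_injective _ ?_, Finset.card_attach]
      intro x y hxy
      have h2 : τ ⟨x.1, hEFball _ x.2⟩ = τ ⟨y.1, hEFball _ y.2⟩ := Subtype.ext hxy
      have h3 := τ.injective h2
      exact Subtype.ext (Subtype.mk_eq_mk.mp h3)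
    rw [c1, c2]; exact hcard

lemma gdist_bddBelow (G₁ G₂ : BasedGraph) :
    BddBelow (insert 1 {x : ℝ | ∃ r : ℕ, BallIso r G₁ G₂ ∧ x = (2 : ℝ)⁻¹ ^ r}) := by
  refine ⟨0, ?_⟩
  rintro x (rfl | ⟨r, _, rfl⟩)
  · norm_num
  · positivity

lemma gdist_le_one (G₁ G₂ : BasedGraph) : gdist G₁ G₂ ≤ 1 :=
  csInf_le (gdist_bddBelow G₁ G₂) (Set.mem_insert 1 _)

lemma gdist_le_of_ballIso {G₁ G₂ : BasedGraph} {r : ℕ} (h : BallIso r G₁ G₂) :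
    gdist G₁ G₂ ≤ (2 : ℝ)⁻¹ ^ r :=
  csInf_le (gdist_bddBelow G₁ G₂) (Set.mem_insert_of_mem _ ⟨r, h, rfl⟩)

lemma gdist_lt_unpack {G₁ G₂ : BasedGraph} {ε : ℝ} (h : gdist G₁ G₂ < ε) :
    1 < ε ∨ ∃ r : ℕ, BallIso r G₁ G₂ ∧ (2 : ℝ)⁻¹ ^ r < ε := by
  obtain ⟨y, hy, hlt⟩ := exists_lt_of_csInf_lt ⟨1, Set.mem_insert 1 _⟩ h
  rcases hy with rfl | ⟨r, hiso, rfl⟩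
  · exact Or.inl hlt
  · exact Or.inr ⟨r, hiso, hlt⟩

lemma pow_half_lt_iff {a b : ℕ} : (2 : ℝ)⁻¹ ^ a < (2 : ℝ)⁻¹ ^ b ↔ b < a :=
  pow_lt_pow_iff_right_of_lt_one₀ (by norm_num) (by norm_num)

theorem completion_exists (G : BasedGraph) (hc : G.Connected) (hreg : G.Regular 3) (R : ℕ) :
    ∃ Δ : BasedGraph, Δ.Connected ∧ Δ.Regular 3 ∧ (∀ r ≤ R, BallIso r G Δ) ∧
      ∀ n : ℕ, RankGe Δ Set.univ n := by
  classical
  obtain ⟨hlf, hdeg⟩ := hreg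
  -- enumeration of outside vertices
  have hCinf : ((G.ballV R)ᶜ).Infinite := ballV_compl_infinite hc hlf R
  haveI : Infinite ↥((G.ballV R)ᶜ) := hCinf.to_subtype
  obtain ⟨denC⟩ : Nonempty (Denumerable ↥((G.ballV R)ᶜ)) :=
    nonempty_denumerable_iff.mpr ⟨inferInstance, inferInstance⟩
  let ec : ℕ ≃ ↥((G.ballV R)ᶜ) := (@Denumerable.eqv _ denC).symm
  set cV : ℕ → ℕ := fun n => (ec n : ℕ) with hcV
  have hcVmem : ∀ n, cV n ∉ G.ballV R := fun n => (ec n).2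
  have hcVinj : Function.Injective cV := fun a b h => ec.injective (Subtype.ext h)
  have hcVsurj : ∀ v, v ∉ G.ballV R → ∃ n, cV n = v := fun v hv =>
    ⟨ec.symm ⟨v, hv⟩, by simp [hcV]⟩
  -- enumeration of outside edges
  have hDinf : ((G.ballE R)ᶜ).Infinite := ballE_compl_infinite hc ⟨hlf, hdeg⟩ R
  haveI : Infinite ↥((G.ballE R)ᶜ) := hDinf.to_subtype
  obtain ⟨denD⟩ : Nonempty (Denumerable ↥((G.ballE R)ᶜ)) :=
    nonempty_denumerable_iff.mpr ⟨inferInstance, inferInstance⟩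
  let ed : ℕ ≃ ↥((G.ballE R)ᶜ) := (@Denumerable.eqv _ denD).symm
  set dE : ℕ → ℕ := fun n => (ed n : ℕ) with hdEd
  have hdEmem : ∀ q, dE q ∉ G.ballE R := fun q => (ed q).2
  have hdEinj : Function.Injective dE := fun a b h => ed.injective (Subtype.ext h)
  have hdEsurj : ∀ e, e ∉ G.ballE R → ∃ q, dE q = e := fun e he =>
    ⟨ed.symm ⟨e, he⟩, by simp [hdEd]⟩
  -- half-edges
  set H : Set ℕ := {e | e ∉ G.ballE R ∧ ∃ u, u ∈ G.edges e ∧ u ∈ G.ballV R} with hHdef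
  have hHfin : H.Finite := by
    refine Set.Finite.subset ((ballV_finite hc hlf R).biUnion fun u _ => hlf u) ?_
    rintro e ⟨-, u, hu1, hu2⟩
    exact Set.mem_biUnion hu2 hu1
  have hHne : H.Nonempty := by
    obtain ⟨w, hw⟩ := hCinf.nonempty
    obtain ⟨nw, fw, hf0, hfn, hfa⟩ := hc G.base w
    have hex : ∃ i, fw i ∉ G.ballV R := ⟨nw, by rwa [hfn]⟩
    have hfind := Nat.find_spec hex
    have hle : Nat.find hex ≤ nw := Nat.find_le (by rwa [hfn])
    have hpos : Nat.find hex ≠ 0 := by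
      intro h0
      rw [h0, hf0] at hfind
      exact hfind (base_mem_ballV R)
    have hprev : fw (Nat.find hex - 1) ∈ G.ballV R := by
      by_contra hcon
      exact Nat.find_min hex (show Nat.find hex - 1 < Nat.find hex by omega) hcon
    obtain ⟨e, he⟩ := hfa (Nat.find hex - 1) (by omega)
    have heq : (Nat.find hex - 1) + 1 = Nat.find hex := by omega
    rw [heq] at he
    refine ⟨e, ?_, fw (Nat.find hex - 1), ?_, hprev⟩
    · intro hmem
      exact hfind (hmem _ (by rw [he]; exact Sym2.mem_mk_right _ _))
    · rw [he]; exact Sym2.mem_mk_left _ _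
  set HF : Finset ℕ := hHfin.toFinset with hHF
  set m := HF.card with hmdef
  have hm0 : 0 < m := Finset.card_pos.mpr ((Set.Finite.toFinset_nonempty hHfin).mpr hHne)
  set hE : Fin m → ℕ := fun k => (HF.equivFin.symm k : ℕ) with hhE
  have hEmem : ∀ k, hE k ∈ H := fun k => hHfin.mem_toFinset.mp (HF.equivFin.symm k).2
  have hEk : ∀ e (he : e ∈ H), hE (HF.equivFin ⟨e, hHfin.mem_toFinset.mpr he⟩) = e := by
    intro e he
    simp [hhE]
  -- ball endpoints of half-edges
  have huB0 : ∀ k : Fin m, ∃ u, u ∈ G.edges (hE k) ∧ u ∈ G.ballV R := fun k => (hEmem k).2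
  set uB : Fin m → ℕ := fun k => (huB0 k).choose with huBdef
  have huB1 : ∀ k, uB k ∈ G.edges (hE k) := fun k => (huB0 k).choose_spec.1
  have huB2 : ∀ k, uB k ∈ G.ballV R := fun k => (huB0 k).choose_spec.2
  have hkey : ∀ k : Fin m, ∃ w, w ∉ G.ballV R ∧ G.edges (hE k) = s(uB k, w) := by
    intro k
    have h1 : hE k ∉ G.ballE R := (hEmem k).1
    have h2 : ∃ w, w ∈ G.edges (hE k) ∧ w ∉ G.ballV R := by
      by_contra hcon
      push_neg at hcon
      exact h1 (fun z hz => hcon z hz)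
    obtain ⟨w, hw1', hw2'⟩ := h2
    obtain ⟨a, b, hab⟩ := sym2_exists (G.edges (hE k))
    have hu := huB1 k
    rw [hab] at hu hw1' ⊢
    have hne : uB k ≠ w := fun h => hw2' (h ▸ huB2 k)
    rcases Sym2.mem_iff.mp hu with h1' | h1' <;> rcases Sym2.mem_iff.mp hw1' with h2' | h2'
    · exact absurd (h1'.trans h2'.symm) hne
    · exact ⟨w, hw2', by rw [← h1', ← h2']⟩
    · exact ⟨w, hw2', by rw [← h1', ← h2', Sym2.eq_swap]⟩
    · exact absurd (h1'.trans h2'.symm) hne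
  set wOut : Fin m → ℕ := fun k => (hkey k).choose with hwOutdef
  have hwOut1 : ∀ k, wOut k ∉ G.ballV R := fun k => (hkey k).choose_spec.1
  have hwOut2 : ∀ k, G.edges (hE k) = s(uB k, wOut k) := fun k => (hkey k).choose_spec.2
  have huBuniq : ∀ (k : Fin m) v, v ∈ G.edges (hE k) → v ∈ G.ballV R → v = uB k := by
    intro k v hv hvB
    rw [hwOut2 k] at hv
    rcases Sym2.mem_iff.mp hv with h | h
    · exact h
    · exact absurd (h ▸ hvB) (hwOut1 k)
  have hdistuB : ∀ k, G.dist G.base (uB k) = R := by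
    intro k
    refine le_antisymm (huB2 k) ?_
    have hadj : G.Adj (uB k) (wOut k) := ⟨hE k, hwOut2 k⟩
    have h1 : G.dist G.base (wOut k) ≤ G.dist G.base (uB k) + 1 := dist_step hc hadj _
    have h2 : ¬ G.dist G.base (wOut k) ≤ R := hwOut1 k
    omega
  -- the new graph
  set W : ℕ → ℕ → ℕ := fun l j => cV (j * m + l) with hW
  set newE : ℕ → Sym2 ℕ := fun q =>
    if hq : q < m then s(uB ⟨q, hq⟩, cV q)
    else
      if (q - m) / m % 3 ≤ 1 then
        s(W ((q - m) % m) (2 * ((q - m) / m / 3)), W ((q - m) % m) (2 * ((q - m) / m / 3) + 1))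
      else
        s(W ((q - m) % m) (2 * ((q - m) / m / 3) + 1), W ((q - m) % m) (2 * ((q - m) / m / 3) + 2))
    with hnewE
  set Δ : BasedGraph :=
    ⟨fun e => if he : e ∈ G.ballE R then G.edges e else newE (ed.symm ⟨e, he⟩), G.base⟩
    with hΔdef
  have hΔEB : ∀ e ∈ G.ballE R, Δ.edges e = G.edges e := fun e he => dif_pos he
  have hΔdE : ∀ q, Δ.edges (dE q) = newE q := by
    intro q
    have h1 : dE q ∉ G.ballE R := hdEmem q
    show (if he : dE q ∈ G.ballE R then G.edges (dE q) else newE (ed.symm ⟨dE q, he⟩)) = newE q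
    rw [dif_neg h1]
    congr 1
    have h2 : (⟨dE q, h1⟩ : ↥((G.ballE R)ᶜ)) = ed q := Subtype.ext rfl
    rw [h2, Equiv.symm_apply_apply]
  have hAttN : ∀ (q : ℕ) (hq : q < m), newE q = s(uB ⟨q, hq⟩, cV q) := by
    intro q hq
    simp only [hnewE]
    rw [dif_pos hq]
  have hAtt : ∀ k : Fin m, Δ.edges (dE k) = s(uB k, cV k) := by
    intro k
    rw [hΔdE, hAttN k k.isLt]
  have hChainN : ∀ l t, l < m →
      newE (m + (t * m + l)) =
        if t % 3 ≤ 1 then s(W l (2 * (t / 3)), W l (2 * (t / 3) + 1))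
        else s(W l (2 * (t / 3) + 1), W l (2 * (t / 3) + 2)) := by
    intro l t hl
    have h1 : ¬ (m + (t * m + l) < m) := by omega
    have h2 : m + (t * m + l) - m = t * m + l := by omega
    have h3 : (t * m + l) % m = l := by rw [Nat.mul_add_mod']; exact Nat.mod_eq_of_lt hl
    have h4 : (t * m + l) / m = t := by
      rw [mul_comm, Nat.mul_add_div hm0, Nat.div_eq_of_lt hl, add_zero]
    simp only [hnewE]
    rw [dif_neg h1, h2, h3, h4]
  have hChain : ∀ l t, l < m →
      Δ.edges (dE (m + (t * m + l))) =
        if t % 3 ≤ 1 then s(W l (2 * (t / 3)), W l (2 * (t / 3) + 1))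
        else s(W l (2 * (t / 3) + 1), W l (2 * (t / 3) + 2)) := by
    intro l t hl
    rw [hΔdE, hChainN l t hl]
  have hWinj : ∀ l j l' j', l < m → l' < m → W l j = W l' j' → l = l' ∧ j = j' := by
    intro l j l' j' hl hl' h
    have h1 : j * m + l = j' * m + l' := hcVinj h
    have h2 : l = l' := by
      have h3 := congrArg (· % m) h1
      simpa [Nat.mul_add_mod', Nat.mod_eq_of_lt hl, Nat.mod_eq_of_lt hl'] using h3
    refine ⟨h2, ?_⟩
    subst h2
    have h4 : j * m = j' * m := by omega
    exact Nat.eq_of_mul_eq_mul_right hm0 h4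
  have hWC : ∀ l j, W l j ∉ G.ballV R := fun l j => hcVmem _
  have hW0 : ∀ l, W l 0 = cV l := by intro l; simp [hW]
  -- membership facts for new edges
  have hAttMem : ∀ q (hq : q < m) z, z ∈ newE q → z = uB ⟨q, hq⟩ ∨ z = cV q := by
    intro q hq z hz
    rw [hAttN q hq] at hz
    exact Sym2.mem_iff.mp hz
  have hChainMem : ∀ q, ¬ q < m → ∀ z, z ∈ newE q → ∃ l' j', l' < m ∧ z = W l' j' := by
    intro q hq z hz
    simp only [hnewE] at hz
    rw [dif_neg hq] at hz
    have hl : (q - m) % m < m := Nat.mod_lt _ hm0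
    by_cases h3 : (q - m) / m % 3 ≤ 1
    · rw [if_pos h3] at hz
      rcases Sym2.mem_iff.mp hz with h | h <;> exact ⟨_, _, hl, h⟩
    · rw [if_neg h3] at hz
      rcases Sym2.mem_iff.mp hz with h | h <;> exact ⟨_, _, hl, h⟩
  -- connectivity
  have hadjC : ∀ l, l < m → ∀ j, Δ.Adj (W l j) (W l (j + 1)) := by
    intro l hl j
    rcases Nat.even_or_odd j with ⟨p, hp⟩ | ⟨p, hp⟩
    · refine ⟨dE (m + (3 * p * m + l)), ?_⟩
      rw [hChain l (3 * p) hl, if_pos (show 3 * p % 3 ≤ 1 by omega),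
        show 3 * p / 3 = p by omega, show 2 * p = j by omega]
    · refine ⟨dE (m + ((3 * p + 2) * m + l)), ?_⟩
      rw [hChain l (3 * p + 2) hl, if_neg (show ¬ (3 * p + 2) % 3 ≤ 1 by omega),
        show (3 * p + 2) / 3 = p by omega, show 2 * p + 1 = j by omega,
        show 2 * p + 2 = j + 1 by omega]
  have hreachB : ∀ v ∈ G.ballV R, Δ.ReachesIn (G.dist G.base v) G.base v := by
    intro v hv
    obtain ⟨f, hf0, hfn, hfa⟩ := reach_dist (hc G.base v)
    refine ⟨f, hf0, hfn, ?_⟩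
    intro i hi
    obtain ⟨e, he⟩ := hfa i hi
    refine ⟨e, ?_⟩
    rw [← he]
    apply hΔEB
    intro z hz
    rw [he] at hz
    have hdi : G.dist G.base (f i) ≤ i :=
      dist_le ⟨f, hf0, rfl, fun j hj => hfa j (by omega)⟩
    have hdi1 : G.dist G.base (f (i+1)) ≤ i + 1 :=
      dist_le ⟨f, hf0, rfl, fun j hj => hfa j (by omega)⟩
    have hvR : G.dist G.base v ≤ R := hv
    rcases Sym2.mem_iff.mp hz with h | h
    · subst h; show G.dist G.base _ ≤ R; omega
    · subst h; show G.dist G.base _ ≤ R; omega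
  have hreachC : ∀ l, l < m → ∀ j, ∃ nn, Δ.ReachesIn nn G.base (W l j) := by
    intro l hl j
    induction j with
    | zero =>
      refine ⟨G.dist G.base (uB ⟨l, hl⟩) + 1, reach_succ (hreachB _ (huB2 _)) ?_⟩
      refine ⟨dE l, ?_⟩
      have h1 := hAtt ⟨l, hl⟩
      rw [hW0 l]
      exact h1
    | succ j ih =>
      obtain ⟨nn, hnn⟩ := ih
      exact ⟨nn + 1, reach_succ hnn (hadjC l hl j)⟩
  have hCrep : ∀ v, v ∉ G.ballV R → ∃ l j, l < m ∧ v = W l j := by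
    intro v hv
    obtain ⟨n, rfl⟩ := hcVsurj v hv
    refine ⟨n % m, n / m, Nat.mod_lt _ hm0, ?_⟩
    simp only [hW]
    congr 1
    rw [mul_comm]
    exact (Nat.div_add_mod n m).symm
  have hΔconn : Δ.Connected := by
    have hbase : ∀ v, ∃ nn, Δ.ReachesIn nn G.base v := by
      intro v
      by_cases hv : v ∈ G.ballV R
      · exact ⟨_, hreachB v hv⟩
      · obtain ⟨l, j, hl, rfl⟩ := hCrep v hv
        exact hreachC l hl j
    intro u v
    obtain ⟨n1, h1⟩ := hbase u
    obtain ⟨n2, h2⟩ := hbase v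
    exact ⟨n1 + n2, reach_trans (reach_symm h1) h2⟩
  -- distance computations
  set φ : ℕ → ℕ := fun v => if v ∈ G.ballV R then G.dist G.base v else R + 1 with hφ
  have hφbase : φ Δ.base = 0 := by
    show φ G.base = 0
    simp [hφ, base_mem_ballV, dist_self]
  have hφlip : ∀ u v, Δ.Adj u v → φ v ≤ φ u + 1 := by
    rintro u v ⟨e, he⟩
    by_cases hEBe : e ∈ G.ballE R
    · rw [hΔEB e hEBe] at he
      have hu : u ∈ G.ballV R := hEBe u (by rw [he]; exact Sym2.mem_mk_left _ _)
      have hv : v ∈ G.ballV R := hEBe v (by rw [he]; exact Sym2.mem_mk_right _ _)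
      have hstep : G.dist G.base v ≤ G.dist G.base u + 1 := dist_step hc ⟨e, he⟩ _
      simp only [hφ, if_pos hu, if_pos hv]
      omega
    · obtain ⟨q, rfl⟩ := hdEsurj e hEBe
      rw [hΔdE] at he
      by_cases hq : q < m
      · rw [hAttN q hq] at he
        rcases Sym2.eq_iff.mp he with ⟨h1, h2⟩ | ⟨h1, h2⟩
        · subst h1; subst h2
          simp only [hφ, if_pos (huB2 ⟨q, hq⟩), if_neg (hcVmem q), hdistuB]
          omega
        · subst h1; subst h2
          simp only [hφ, if_pos (huB2 ⟨q, hq⟩), if_neg (hcVmem q), hdistuB]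
          omega
      · have h1 : v ∈ newE q := by rw [he]; exact Sym2.mem_mk_right _ _
        have h2 : u ∈ newE q := by rw [he]; exact Sym2.mem_mk_left _ _
        obtain ⟨l', j', hl', rfl⟩ := hChainMem q hq v h1
        obtain ⟨l'', j'', hl'', rfl⟩ := hChainMem q hq u h2
        simp only [hφ, if_neg (hWC l' j'), if_neg (hWC l'' j'')]
        omega
  have hφle : ∀ v, φ v ≤ Δ.dist Δ.base v := fun v =>
    phi_le_dist φ hφbase hφlip (hΔconn Δ.base v)
  have hdistB : ∀ v ∈ G.ballV R, Δ.dist Δ.base v = G.dist G.base v := by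
    intro v hv
    refine le_antisymm (dist_le (hreachB v hv)) ?_
    have h1 := hφle v
    simpa [hφ, if_pos hv] using h1
  have hdistC : ∀ v, v ∉ G.ballV R → R + 1 ≤ Δ.dist Δ.base v := by
    intro v hv
    have h1 := hφle v
    simpa [hφ, if_neg hv] using h1
  have hballV : ∀ r ≤ R, Δ.ballV r = G.ballV r := by
    intro r hr
    ext v
    show Δ.dist Δ.base v ≤ r ↔ G.dist G.base v ≤ r
    constructor
    · intro h
      by_cases hv : v ∈ G.ballV R
      · rwa [hdistB v hv] at h
      · have := hdistC v hv; omega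
    · intro h
      have hv : v ∈ G.ballV R := le_trans h hr
      rwa [hdistB v hv]
  have hballE : ∀ r ≤ R, Δ.ballE r = G.ballE r := by
    intro r hr
    ext e
    constructor
    · intro h
      by_cases hEBe : e ∈ G.ballE R
      · intro z hz
        have h2 := h z (show z ∈ Δ.edges e by rwa [hΔEB e hEBe])
        rwa [hballV r hr] at h2
      · exfalso
        obtain ⟨q, rfl⟩ := hdEsurj e hEBe
        have hzout : ∃ z, z ∈ newE q ∧ z ∉ G.ballV R := by
          by_cases hq : q < m
          · exact ⟨cV q, by rw [hAttN q hq]; exact Sym2.mem_mk_right _ _, hcVmem q⟩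
          · obtain ⟨a, b, hab⟩ := sym2_exists (newE q)
            have ha : a ∈ newE q := by rw [hab]; exact Sym2.mem_mk_left _ _
            obtain ⟨l', j', hl', rfl⟩ := hChainMem q hq a ha
            exact ⟨_, ha, hWC l' j'⟩
        obtain ⟨z, hz1, hz2⟩ := hzout
        have h3 := h z (by rw [hΔdE]; exact hz1)
        rw [hballV r hr] at h3
        exact hz2 (ballV_mono hr h3)
    · intro h z hz
      have heB : e ∈ G.ballE R := fun w hw => ballV_mono hr (h w hw)
      rw [hΔEB e heB] at hz
      rw [hballV r hr]
      exact h z hz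
  have hIso : ∀ r ≤ R, BallIso r G Δ := by
    intro r hr
    exact BallIso.rfl_of_eq rfl (hballV r hr).symm (hballE r hr).symm
      (fun e he => (hΔEB e (ballE_mono hr he)).symm)
  -- infinite rank
  have hrank : ∀ n : ℕ, RankGe Δ Set.univ n := by
    intro n
    match n with
    | 0 => exact ⟨∅, ∅, by simp, by simp, by simp⟩
    | (n+1) =>
      refine ⟨(Finset.range (2*n+2)).image (W 0),
              (Finset.range (3*n+2)).image (fun t => dE (m + (t * m + 0))), ?_, ?_, ?_⟩
      · intro x _; trivial
      · intro e he z hz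
        simp only [Finset.mem_image, Finset.mem_range] at he
        obtain ⟨t, ht, rfl⟩ := he
        rw [hChain 0 t hm0] at hz
        simp only [Finset.mem_image, Finset.mem_range]
        by_cases h3 : t % 3 ≤ 1
        · rw [if_pos h3] at hz
          rcases Sym2.mem_iff.mp hz with h | h
          · exact ⟨2*(t/3), by omega, h.symm⟩
          · exact ⟨2*(t/3)+1, by omega, h.symm⟩
        · rw [if_neg h3] at hz
          rcases Sym2.mem_iff.mp hz with h | h
          · exact ⟨2*(t/3)+1, by omega, h.symm⟩
          · exact ⟨2*(t/3)+2, by omega, h.symm⟩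
      · have c1 : ((Finset.range (2*n+2)).image (W 0)).card = 2*n+2 := by
          rw [Finset.card_image_of_injOn, Finset.card_range]
          intro a _ b _ hab
          exact (hWinj 0 a 0 b hm0 hm0 hab).2
        have c2 : ((Finset.range (3*n+2)).image (fun t => dE (m + (t * m + 0)))).card
            = 3*n+2 := by
          rw [Finset.card_image_of_injOn, Finset.card_range]
          intro a _ b _ hab
          have h1 := hdEinj hab
          have h2 : a * m = b * m := by omega
          exact Nat.eq_of_mul_eq_mul_right hm0 h2
        rw [c1, c2]
        omega
  -- degrees of ball vertices
  have hB3 : ∀ v ∈ G.ballV R, {e | v ∈ Δ.edges e}.Finite ∧ Δ.degree v = 3 := by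
    intro v hv
    set g : ℕ → ℕ := fun e =>
      if he : e ∈ H then dE (HF.equivFin ⟨e, hHfin.mem_toFinset.mpr he⟩) else e with hg
    have hgH : ∀ e (he : e ∈ H),
        g e = dE (HF.equivFin ⟨e, hHfin.mem_toFinset.mpr he⟩) := fun e he => dif_pos he
    have hgNH : ∀ e, e ∉ H → g e = e := fun e he => dif_neg he
    have hEBor : ∀ e, v ∈ G.edges e → e ∉ H → e ∈ G.ballE R := by
      intro e hve heH
      by_contra hEBe
      exact heH ⟨hEBe, v, hve, hv⟩
    have himg : g '' {e | v ∈ G.edges e} = {e | v ∈ Δ.edges e} := by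
      ext e'
      constructor
      · rintro ⟨e, he, rfl⟩
        by_cases heH : e ∈ H
        · rw [hgH e heH]
          show v ∈ Δ.edges _
          rw [hAtt (HF.equivFin ⟨e, hHfin.mem_toFinset.mpr heH⟩)]
          have hveq : v = uB (HF.equivFin ⟨e, hHfin.mem_toFinset.mpr heH⟩) :=
            huBuniq _ v (by rw [hEk e heH]; exact he) hv
          rw [← hveq]
          exact Sym2.mem_mk_left _ _
        · rw [hgNH e heH]
          show v ∈ Δ.edges e
          rw [hΔEB e (hEBor e he heH)]
          exact he
      · intro he'
        by_cases hEBe : e' ∈ G.ballE R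
        · have h1 : v ∈ G.edges e' := by
            rw [← hΔEB e' hEBe]; exact he'
          refine ⟨e', h1, hgNH e' fun hH' => hH'.1 hEBe⟩
        · obtain ⟨q, rfl⟩ := hdEsurj e' hEBe
          have hvq : v ∈ newE q := by rw [← hΔdE]; exact he'
          by_cases hq : q < m
          · rcases hAttMem q hq v hvq with h | h
            · refine ⟨hE ⟨q, hq⟩, ?_, ?_⟩
              · show v ∈ G.edges (hE ⟨q, hq⟩); rw [h]; exact huB1 _
              · rw [hgH _ (hEmem ⟨q, hq⟩)]
                have h2 : (⟨hE ⟨q,hq⟩, hHfin.mem_toFinset.mpr (hEmem _)⟩ : ↥HF)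
                    = HF.equivFin.symm ⟨q, hq⟩ := Subtype.ext rfl
                rw [h2, Equiv.apply_symm_apply]
            · exact absurd (h ▸ hv) (hcVmem q)
          · obtain ⟨l', j', hl', h⟩ := hChainMem q hq v hvq
            exact absurd (h ▸ hv) (hWC l' j')
    have hinj : Set.InjOn g {e | v ∈ G.edges e} := by
      intro a ha b hb hab
      by_cases haH : a ∈ H <;> by_cases hbH : b ∈ H
      · rw [hgH a haH, hgH b hbH] at hab
        have h1 := hdEinj hab
        have h2 : (HF.equivFin ⟨a, hHfin.mem_toFinset.mpr haH⟩)
            = (HF.equivFin ⟨b, hHfin.mem_toFinset.mpr hbH⟩) := Fin.ext h1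
        have h3 := HF.equivFin.injective h2
        exact congrArg Subtype.val h3
      · rw [hgH a haH, hgNH b hbH] at hab
        exact absurd (hab ▸ hEBor b hb hbH) (hdEmem _)
      · rw [hgNH a haH, hgH b hbH] at hab
        exact absurd (hab ▸ hdEmem _) (not_not_intro (hEBor a ha haH))
      · rw [hgNH a haH, hgNH b hbH] at hab
        exact hab
    have hloops : {e | Δ.edges e = s(v, v)} = {e | G.edges e = s(v, v)} := by
      ext e
      constructor
      · intro he
        by_cases hEBe : e ∈ G.ballE R
        · show G.edges e = s(v,v)
          rw [← hΔEB e hEBe]; exact he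
        · exfalso
          obtain ⟨q, rfl⟩ := hdEsurj e hEBe
          replace he : Δ.edges (dE q) = s(v, v) := he
          rw [hΔdE] at he
          by_cases hq : q < m
          · have h2 : cV q ∈ newE q := by
              rw [hAttN q hq]; exact Sym2.mem_mk_right _ _
            rw [he] at h2
            rcases Sym2.mem_iff.mp h2 with h | h <;> exact hcVmem q (h ▸ hv)
          · have h1 : v ∈ newE q := by rw [he]; exact Sym2.mem_mk_left _ _
            obtain ⟨l', j', hl', hWeq⟩ := hChainMem q hq v h1
            exact hWC l' j' (hWeq ▸ hv)
      · intro he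
        have hEBe : e ∈ G.ballE R := by
          intro z hz
          rw [he] at hz
          rcases Sym2.mem_iff.mp hz with h | h <;> (subst h; exact hv)
        show Δ.edges e = s(v,v)
        rw [hΔEB e hEBe]; exact he
    constructor
    · rw [← himg]; exact (hlf v).image g
    · have hG := hdeg v
      rw [degree] at hG ⊢
      rw [← himg, Set.ncard_image_of_injOn hinj, hloops]
      exact hG
  -- membership characterization for chain vertices
  have hmemW : ∀ l j, l < m → ∀ q, (W l j ∈ newE q ↔
      ((j = 0 ∧ q = l) ∨
       ∃ t, q = m + (t * m + l) ∧
         ((t % 3 ≤ 1 ∧ (j = 2 * (t/3) ∨ j = 2 * (t/3) + 1)) ∨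
          (¬ t % 3 ≤ 1 ∧ (j = 2 * (t/3) + 1 ∨ j = 2 * (t/3) + 2))))) := by
    intro l j hl q
    constructor
    · intro hmem
      by_cases hq : q < m
      · rcases hAttMem q hq _ hmem with h | h
        · exact absurd (by rw [h]; exact huB2 _) (hWC l j)
        · have h1 : j * m + l = q := hcVinj h
          have hj : j = 0 := by
            by_contra hj0
            have h2 : m ≤ j * m := Nat.le_mul_of_pos_left m (Nat.pos_of_ne_zero hj0)
            omega
          subst hj
          rw [Nat.zero_mul, Nat.zero_add] at h1
          exact Or.inl ⟨rfl, h1.symm⟩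
      · have hqm : m ≤ q := Nat.le_of_not_lt hq
        have hmod : (q - m) % m < m := Nat.mod_lt _ hm0
        have h1 : (q - m) / m * m + (q - m) % m = q - m := by
          rw [mul_comm]; exact Nat.div_add_mod (q - m) m
        have hqeq : q = m + ((q - m) / m * m + (q - m) % m) := by rw [h1]; omega
        rw [hqeq, hChainN ((q - m) % m) ((q - m) / m) hmod] at hmem
        by_cases h3 : (q - m) / m % 3 ≤ 1
        · rw [if_pos h3] at hmem
          rcases Sym2.mem_iff.mp hmem with h | h
          · obtain ⟨hll, hjj⟩ := hWinj _ _ _ _ hl hmod h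
            exact Or.inr ⟨(q - m) / m, by rw [hll]; exact hqeq, Or.inl ⟨h3, Or.inl hjj⟩⟩
          · obtain ⟨hll, hjj⟩ := hWinj _ _ _ _ hl hmod h
            exact Or.inr ⟨(q - m) / m, by rw [hll]; exact hqeq, Or.inl ⟨h3, Or.inr hjj⟩⟩
        · rw [if_neg h3] at hmem
          rcases Sym2.mem_iff.mp hmem with h | h
          · obtain ⟨hll, hjj⟩ := hWinj _ _ _ _ hl hmod h
            exact Or.inr ⟨(q - m) / m, by rw [hll]; exact hqeq, Or.inr ⟨h3, Or.inl hjj⟩⟩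
          · obtain ⟨hll, hjj⟩ := hWinj _ _ _ _ hl hmod h
            exact Or.inr ⟨(q - m) / m, by rw [hll]; exact hqeq, Or.inr ⟨h3, Or.inr hjj⟩⟩
    · rintro (⟨hj, hqq⟩ | ⟨t, rfl, hcond⟩)
      · subst hj
        rw [hqq, hAttN l hl, hW0 l]
        exact Sym2.mem_mk_right _ _
      · rw [hChainN l t hl]
        rcases hcond with ⟨h3, hj | hj⟩ | ⟨h3, hj | hj⟩
        · rw [if_pos h3, hj]; exact Sym2.mem_mk_left _ _
        · rw [if_pos h3, hj]; exact Sym2.mem_mk_right _ _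
        · rw [if_neg h3, hj]; exact Sym2.mem_mk_left _ _
        · rw [if_neg h3, hj]; exact Sym2.mem_mk_right _ _
  -- degrees of chain vertices
  have hC3 : ∀ v, v ∉ G.ballV R → {e | v ∈ Δ.edges e}.Finite ∧ Δ.degree v = 3 := by
    intro v hv
    obtain ⟨l, j, hl, rfl⟩ := hCrep v hv
    have hinc : {e | W l j ∈ Δ.edges e} = dE '' {q | W l j ∈ newE q} := by
      ext e
      simp only [Set.mem_setOf_eq, Set.mem_image]
      constructor
      · intro he
        replace he : W l j ∈ Δ.edges e := he
        have hEBe : e ∉ G.ballE R := by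
          intro hEBe
          rw [hΔEB e hEBe] at he
          exact hWC l j (hEBe _ he)
        obtain ⟨q, rfl⟩ := hdEsurj e hEBe
        exact ⟨q, by rwa [← hΔdE], rfl⟩
      · rintro ⟨q, hq, rfl⟩
        show W l j ∈ Δ.edges (dE q)
        rw [hΔdE]; exact hq
    have hmul : ∀ a b : ℕ, a < b → a * m < b * m :=
      fun a b hab => mul_lt_mul_of_pos_right hab hm0
    have hqset : ∃ q1 q2 q3 : ℕ, q1 ≠ q2 ∧ q1 ≠ q3 ∧ q2 ≠ q3 ∧
        {q | W l j ∈ newE q} = {q1, q2, q3} := by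
      have hsetext : ∀ t1 t2 t3 : ℕ, (∀ q, (W l j ∈ newE q) ↔
          (q = m + (t1 * m + l) ∨ q = m + (t2 * m + l) ∨ q = m + (t3 * m + l))) →
          t1 < t2 → t2 < t3 →
          ∃ q1 q2 q3 : ℕ, q1 ≠ q2 ∧ q1 ≠ q3 ∧ q2 ≠ q3 ∧
            {q | W l j ∈ newE q} = {q1, q2, q3} := by
        intro t1 t2 t3 hiff h12 h23
        have m12 := hmul t1 t2 h12
        have m13 := hmul t1 t3 (by omega)
        have m23 := hmul t2 t3 h23
        refine ⟨m + (t1 * m + l), m + (t2 * m + l), m + (t3 * m + l),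
          by omega, by omega, by omega, ?_⟩
        ext q
        simp only [Set.mem_setOf_eq, Set.mem_insert_iff, Set.mem_singleton_iff]
        exact hiff q
      rcases Nat.eq_zero_or_pos j with hj0 | hjpos
      · -- j = 0 : attachment + two ends of the first double edge
        subst hj0
        refine ⟨l, m + (0 * m + l), m + (1 * m + l), by omega,
          by have := hmul 0 1 (by omega); omega,
          by have := hmul 0 1 (by omega); omega, ?_⟩
        ext q
        simp only [Set.mem_setOf_eq, Set.mem_insert_iff, Set.mem_singleton_iff]
        rw [hmemW l 0 hl q]
        constructor
        · rintro (⟨-, rfl⟩ | ⟨t, rfl, hcond⟩)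
          · exact Or.inl rfl
          · rcases hcond with ⟨h3, hj⟩ | ⟨h3, hj⟩
            · have ht : t = 0 ∨ t = 1 := by omega
              rcases ht with rfl | rfl
              · exact Or.inr (Or.inl rfl)
              · exact Or.inr (Or.inr rfl)
            · exfalso; omega
        · rintro (rfl | rfl | rfl)
          · exact Or.inl ⟨rfl, rfl⟩
          · exact Or.inr ⟨0, rfl, Or.inl ⟨by omega, Or.inl (by omega)⟩⟩
          · exact Or.inr ⟨1, rfl, Or.inl ⟨by omega, Or.inl (by omega)⟩⟩
      · rcases Nat.even_or_odd j with ⟨p, hp⟩ | ⟨p, hp⟩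
        · -- j = 2p+2 (even, positive)
          have hp2 : j = 2 * (p - 1) + 2 := by omega
          set p' := p - 1 with hp'
          refine hsetext (3 * p' + 2) (3 * p' + 3) (3 * p' + 4) ?_ (by omega) (by omega)
          intro q
          rw [hmemW l j hl q]
          constructor
          · rintro (⟨hj0, -⟩ | ⟨t, rfl, hcond⟩)
            · omega
            · rcases hcond with ⟨h3, hj | hj⟩ | ⟨h3, hj | hj⟩
              · have ht : t = 3 * p' + 3 ∨ t = 3 * p' + 4 := by omega
                rcases ht with rfl | rfl
                · exact Or.inr (Or.inl rfl)
                · exact Or.inr (Or.inr rfl)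
              · exfalso; omega
              · exfalso; omega
              · have ht : t = 3 * p' + 2 := by omega
                subst ht
                exact Or.inl rfl
          · rintro (rfl | rfl | rfl)
            · exact Or.inr ⟨3 * p' + 2, rfl, Or.inr ⟨by omega, Or.inr (by omega)⟩⟩
            · exact Or.inr ⟨3 * p' + 3, rfl, Or.inl ⟨by omega, Or.inl (by omega)⟩⟩
            · exact Or.inr ⟨3 * p' + 4, rfl, Or.inl ⟨by omega, Or.inl (by omega)⟩⟩
        · -- j = 2p+1 (odd)
          refine hsetext (3 * p) (3 * p + 1) (3 * p + 2) ?_ (by omega) (by omega)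
          intro q
          rw [hmemW l j hl q]
          constructor
          · rintro (⟨hj0, -⟩ | ⟨t, rfl, hcond⟩)
            · omega
            · rcases hcond with ⟨h3, hj | hj⟩ | ⟨h3, hj | hj⟩
              · exfalso; omega
              · have ht : t = 3 * p ∨ t = 3 * p + 1 := by omega
                rcases ht with rfl | rfl
                · exact Or.inl rfl
                · exact Or.inr (Or.inl rfl)
              · have ht : t = 3 * p + 2 := by omega
                subst ht
                exact Or.inr (Or.inr rfl)
              · exfalso; omega
          · rintro (rfl | rfl | rfl)
            · exact Or.inr ⟨3 * p, rfl, Or.inl ⟨by omega, Or.inr (by omega)⟩⟩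
            · exact Or.inr ⟨3 * p + 1, rfl, Or.inl ⟨by omega, Or.inr (by omega)⟩⟩
            · exact Or.inr ⟨3 * p + 2, rfl, Or.inr ⟨by omega, Or.inl (by omega)⟩⟩
    have hloops : {e | Δ.edges e = s(W l j, W l j)} = ∅ := by
      ext e
      simp only [Set.mem_empty_iff_false, iff_false, Set.mem_setOf_eq]
      intro he
      replace he : Δ.edges e = s(W l j, W l j) := he
      by_cases hEBe : e ∈ G.ballE R
      · rw [hΔEB e hEBe] at he
        exact hWC l j (hEBe _ (by rw [he]; exact Sym2.mem_mk_left _ _))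
      · obtain ⟨q, rfl⟩ := hdEsurj e hEBe
        rw [hΔdE] at he
        by_cases hq : q < m
        · rw [hAttN q hq] at he
          rcases Sym2.eq_iff.mp he with ⟨h1, h2⟩ | ⟨h1, h2⟩ <;>
            exact (hWC l j) (by rw [← h1]; exact huB2 _)
        · simp only [hnewE] at he
          rw [dif_neg hq] at he
          have hl' : (q-m) % m < m := Nat.mod_lt _ hm0
          by_cases h3 : (q-m)/m % 3 ≤ 1
          · rw [if_pos h3] at he
            rcases Sym2.eq_iff.mp he with ⟨h1, h2⟩ | ⟨h1, h2⟩ <;>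
            · have e1 := (hWinj _ _ _ _ hl' hl h1).2
              have e2 := (hWinj _ _ _ _ hl' hl h2).2
              omega
          · rw [if_neg h3] at he
            rcases Sym2.eq_iff.mp he with ⟨h1, h2⟩ | ⟨h1, h2⟩ <;>
            · have e1 := (hWinj _ _ _ _ hl' hl h1).2
              have e2 := (hWinj _ _ _ _ hl' hl h2).2
              omega
    obtain ⟨q1, q2, q3, h12, h13, h23, hQ⟩ := hqset
    have hfin : {e | W l j ∈ Δ.edges e}.Finite := by
      rw [hinc, hQ]
      exact ((Set.finite_singleton q3).insert q2 |>.insert q1).image dE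
    refine ⟨hfin, ?_⟩
    rw [degree, hloops, hinc, hQ, Set.ncard_empty,
      Set.ncard_image_of_injective _ hdEinj,
      Set.ncard_insert_of_notMem (by simp [h12, h13]),
      Set.ncard_insert_of_notMem (by simp [h23]), Set.ncard_singleton]
  refine ⟨Δ, hΔconn, ⟨?_, ?_⟩, hIso, hrank⟩
  · intro v
    by_cases hv : v ∈ G.ballV R
    · exact (hB3 v hv).1
    · exact (hC3 v hv).1
  · intro v
    by_cases hv : v ∈ G.ballV R
    · exact (hB3 v hv).2
    · exact (hC3 v hv).2

end BasedGraph

open BasedGraph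

/-- The space `𝒢_k` of based, connected, infinite (vertex set `ℕ`), `k`-regular graphs. -/
def Gspace (k : ℕ) : Type := {G : BasedGraph // G.Connected ∧ G.Regular k}

/-- The metric topology on `𝒢_k`, generated by the metric balls of `gdist`. -/
instance (k : ℕ) : TopologicalSpace (Gspace k) :=
  generateFrom {U | ∃ (Γ : Gspace k) (ε : ℝ), 0 < ε ∧ U = {Δ | gdist Γ.1 Δ.1 < ε}}

/-- in `𝒢₃`, the set of graphs of infinite rank is a dense `G_δ`. -/
theorem infinite_rank_dense_Gdelta :
    IsGδ {Δ : Gspace 3 | ∀ n : ℕ, RankGe Δ.1 Set.univ n} ∧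
    Dense {Δ : Gspace 3 | ∀ n : ℕ, RankGe Δ.1 Set.univ n} := by
  have hball_open : ∀ (Γ : Gspace 3) (ε : ℝ), 0 < ε →
      IsOpen {Δ : Gspace 3 | gdist Γ.1 Δ.1 < ε} :=
    fun Γ ε hε => TopologicalSpace.GenerateOpen.basic _ ⟨Γ, ε, hε, rfl⟩
  constructor
  · have hEq : {Δ : Gspace 3 | ∀ n : ℕ, RankGe Δ.1 Set.univ n}
        = ⋂ n : ℕ, {Δ : Gspace 3 | RankGe Δ.1 Set.univ n} := by
      ext Δ
      simp only [Set.mem_iInter, Set.mem_setOf_eq]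
    rw [hEq]
    refine IsGδ.iInter fun n => IsOpen.isGδ ?_
    rw [isOpen_iff_mem_nhds]
    intro Δ hΔ
    obtain ⟨VF, EF, hVFA, hEF, hcard⟩ := hΔ
    set R := VF.sup (Δ.1.dist Δ.1.base) with hRdef
    have hVFball : ∀ v ∈ VF, v ∈ Δ.1.ballV R := fun v hv =>
      (show Δ.1.dist Δ.1.base v ≤ R from Finset.le_sup hv)
    refine Filter.mem_of_superset
      ((hball_open Δ ((2:ℝ)⁻¹^R) (by positivity)).mem_nhds ?_) ?_
    · show gdist Δ.1 Δ.1 < (2:ℝ)⁻¹^R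
      have hiso : BallIso (R+1) Δ.1 Δ.1 := BallIso.rfl_of_eq rfl rfl rfl (fun _ _ => rfl)
      calc gdist Δ.1 Δ.1 ≤ (2:ℝ)⁻¹^(R+1) := gdist_le_of_ballIso hiso
        _ < (2:ℝ)⁻¹^R := pow_half_lt_iff.mpr (by omega)
    · intro Δ' hΔ'
      show RankGe Δ'.1 Set.univ n
      rcases gdist_lt_unpack hΔ' with h1 | ⟨r, hiso, hr⟩
      · exfalso
        have h2 : (2:ℝ)⁻¹^R ≤ 1 := pow_le_one₀ (by norm_num) (by norm_num)
        linarith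
      · have hRr : R ≤ r := le_of_lt (pow_half_lt_iff.mp hr)
        exact RankGe_of_ballIso hiso VF EF
          (fun v hv => ballV_mono hRr (hVFball v hv)) hEF hcard
  · rw [dense_iff_inter_open]
    rintro U hU ⟨x, hx⟩
    have key : ∀ (V : Set (Gspace 3)), IsOpen V → ∀ y ∈ V, ∃ R : ℕ,
        ∀ Δ : Gspace 3, (∀ r ≤ R, BallIso r y.1 Δ.1) → Δ ∈ V := by
      intro V hV
      replace hV : TopologicalSpace.GenerateOpen
          {U | ∃ (Γ : Gspace 3) (ε : ℝ), 0 < ε ∧ U = {Δ | gdist Γ.1 Δ.1 < ε}} V := hV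
      induction hV with
      | basic s hs =>
        obtain ⟨Γ, ε, hε, rfl⟩ := hs
        intro y hy
        rcases gdist_lt_unpack hy with h1 | ⟨r₀, hiso, hr₀⟩
        · exact ⟨0, fun Δ _ => lt_of_le_of_lt (gdist_le_one _ _) h1⟩
        · refine ⟨r₀, fun Δ hΔ => ?_⟩
          have h2 : BallIso r₀ Γ.1 Δ.1 := BallIso.trans' hiso (hΔ r₀ le_rfl)
          exact lt_of_le_of_lt (gdist_le_of_ballIso h2) hr₀
      | univ => exact fun y _ => ⟨0, fun Δ _ => trivial⟩
      | inter s t _ _ ihs iht =>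
        intro y hy
        obtain ⟨R1, h1⟩ := ihs y hy.1
        obtain ⟨R2, h2⟩ := iht y hy.2
        exact ⟨max R1 R2, fun Δ hΔ =>
          ⟨h1 Δ (fun r hr => hΔ r (le_trans hr (le_max_left _ _))),
           h2 Δ (fun r hr => hΔ r (le_trans hr (le_max_right _ _)))⟩⟩
      | sUnion S hS ih =>
        intro y hy
        obtain ⟨s, hsS, hys⟩ := hy
        obtain ⟨R, hR⟩ := ih s hsS y hys
        exact ⟨R, fun Δ hΔ => ⟨s, hsS, hR Δ hΔ⟩⟩
    obtain ⟨R, hR⟩ := key U hU x hx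
    obtain ⟨Δg, hconn, hreg, hiso, hrank⟩ := completion_exists x.1 x.2.1 x.2.2 R
    exact ⟨⟨Δg, hconn, hreg⟩, hR _ hiso, fun n => hrank n⟩
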